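/- Let U : [0, T] → (ℝ^d)^J be a continuously differentiable solution of the ensemble Kalman particle dynamics, and set m(t) := (1/J) Σ_{j=1}^J u^j(t) and E(t) := (1/J) Σ_{j=1}^J u^j(t) ⊗ u^j(t). Then E is continuously differentiable and satisfies the second-moment equation d/dt E(t) = C(U(t)) Gᵀ Γ^{-1} (y ⊗ m(t) − G E(t)) + [C(U(t)) Gᵀ Γ^{-1} (y ⊗ m(t) − G E(t))]ᵀ, where y ⊗ m denotes the k×d matrix y mᵀ. -/

import Mathlib

/-!
Second-moment equation: along any C¹ solution of the ensemble Kalman particle dynamics,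
`E(t) = (1/J) ∑ⱼ uʲ(t) ⊗ uʲ(t)` satisfies
`d/dt E = C Gᵀ Γ⁻¹ (y ⊗ m − G E) + [C Gᵀ Γ⁻¹ (y ⊗ m − G E)]ᵀ`.
-/

open Matrix Set

attribute [local instance] Matrix.normedAddCommGroup Matrix.normedSpace

/-- The sample mean `Ū = (1/J) ∑ⱼ uʲ` of an ensemble `U ∈ (ℝ^d)^J`. -/
noncomputable def sampleMean {d J : ℕ} (U : Fin J → Fin d → ℝ) : Fin d → ℝ :=
  (J : ℝ)⁻¹ • ∑ j, U j

/-- The sample covariance `C(U) = (1/J) ∑ⱼ (uʲ − Ū) ⊗ (uʲ − Ū)`. -/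
noncomputable def sampleCov {d J : ℕ} (U : Fin J → Fin d → ℝ) :
    Matrix (Fin d) (Fin d) ℝ :=
  (J : ℝ)⁻¹ • ∑ j, vecMulVec (U j - sampleMean U) (U j - sampleMean U)

/-- The second moment `E(U) = (1/J) ∑ⱼ uʲ ⊗ uʲ`. -/
noncomputable def secondMoment {d J : ℕ} (U : Fin J → Fin d → ℝ) :
    Matrix (Fin d) (Fin d) ℝ :=
  (J : ℝ)⁻¹ • ∑ j, vecMulVec (U j) (U j)

/-- Right-hand side of the ensemble Kalman particle dynamics:
`(d/dt) uʲ = C(U) Gᵀ Γ⁻¹ (y − G uʲ)`. -/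
noncomputable def enkfRHS {d k J : ℕ} (G : Matrix (Fin k) (Fin d) ℝ)
    (Γ : Matrix (Fin k) (Fin k) ℝ) (y : Fin k → ℝ) (U : Fin J → Fin d → ℝ) :
    Fin J → Fin d → ℝ :=
  fun j => (sampleCov U * Gᵀ * Γ⁻¹).mulVec (y - G.mulVec (U j))

lemma enkf_key {d k J : ℕ} (A : Matrix (Fin d) (Fin k) ℝ) (G : Matrix (Fin k) (Fin d) ℝ)
    (y : Fin k → ℝ) (V : Fin J → Fin d → ℝ) (i i' : Fin d) :
    (J:ℝ)⁻¹ * ∑ j, (A.mulVec (y - G.mulVec (V j))) i * V j i'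
      = (A * (vecMulVec y (sampleMean V) - G * secondMoment V)) i i' := by
  simp only [Matrix.mul_apply, Matrix.mulVec, dotProduct, vecMulVec, sampleMean,
    secondMoment, Matrix.sub_apply, Matrix.smul_apply, Matrix.sum_apply, Pi.sub_apply,
    Pi.smul_apply, Finset.sum_apply, smul_eq_mul, Matrix.of_apply, sub_mul, mul_sub,
    Finset.mul_sum, Finset.sum_sub_distrib, Finset.sum_mul]
  congr 1
  · rw [Finset.sum_comm]
    exact Finset.sum_congr rfl fun l _ => Finset.sum_congr rfl fun j _ => by ring
  · rw [Finset.sum_comm]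
    refine Finset.sum_congr rfl fun l _ => ?_
    rw [Finset.sum_comm]
    exact Finset.sum_congr rfl fun p _ => Finset.sum_congr rfl fun j _ => by ring

theorem enkf_second_moment_equation
    {d k J : ℕ} (hd : 1 ≤ d) (hk : 1 ≤ k) (hJ : 1 ≤ J)
    (G : Matrix (Fin k) (Fin d) ℝ) (Γ : Matrix (Fin k) (Fin k) ℝ)
    (hΓ : Γ.PosDef) (y : Fin k → ℝ)
    (T : ℝ) (hT : 0 < T) (U : ℝ → Fin J → Fin d → ℝ)
    (hU : ∀ t ∈ Icc (0 : ℝ) T, HasDerivWithinAt U (enkfRHS G Γ y (U t)) (Icc 0 T) t) :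
    ∀ t ∈ Icc (0 : ℝ) T,
      HasDerivWithinAt (fun s => secondMoment (U s))
        (sampleCov (U t) * Gᵀ * Γ⁻¹
            * (vecMulVec y (sampleMean (U t)) - G * secondMoment (U t))
          + (sampleCov (U t) * Gᵀ * Γ⁻¹
            * (vecMulVec y (sampleMean (U t)) - G * secondMoment (U t)))ᵀ)
        (Icc 0 T) t := by
  intro t ht
  set A := sampleCov (U t) * Gᵀ * Γ⁻¹ with hA
  set F := enkfRHS G Γ y (U t) with hF
  have hder : ∀ j i, HasDerivWithinAt (fun s => U s j i) (F j i) (Icc 0 T) t := by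
    intro j i
    exact hasDerivWithinAt_pi.mp (hasDerivWithinAt_pi.mp (hU t ht) j) i
  refine hasDerivWithinAt_pi.mpr fun i => hasDerivWithinAt_pi.mpr fun i' => ?_
  have h1 : HasDerivWithinAt (fun s => (J:ℝ)⁻¹ * ∑ j, U s j i * U s j i')
      ((J:ℝ)⁻¹ * ∑ j, (F j i * U t j i' + U t j i * F j i')) (Icc 0 T) t :=
    (HasDerivWithinAt.fun_sum fun j _ => (hder j i).mul (hder j i')).const_mul _
  have hfun : (fun s => secondMoment (U s) i i') = fun s => (J:ℝ)⁻¹ * ∑ j, U s j i * U s j i' := by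
    funext s
    simp [secondMoment, vecMulVec, Matrix.smul_apply, Matrix.sum_apply]
  have hval : ((A * (vecMulVec y (sampleMean (U t)) - G * secondMoment (U t))
        + (A * (vecMulVec y (sampleMean (U t)) - G * secondMoment (U t)))ᵀ) i) i'
      = (J:ℝ)⁻¹ * ∑ j, (F j i * U t j i' + U t j i * F j i') := by
    have k1 := enkf_key A G y (U t) i i'
    have k2 := enkf_key A G y (U t) i' i
    simp only [Matrix.add_apply, Matrix.transpose_apply, ← k1, ← k2]
    rw [Finset.sum_add_distrib, mul_add]
    congr 1
    congr 1
    exact Finset.sum_congr rfl fun j _ => mul_comm _ _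
  exact hval ▸ hfun ▸ h1
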